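/- Let η, λ > 0, L1 > 0, M̄ > 0, and let α: [0,∞) → [0,∞) be strictly increasing continuous with α(0)=0 (class K∞). Suppose for every initial size c > 0 there is a bound x(t) ≤ min{ c·e^{λ(t-t0)}, L1·M(c)·e^{-η(t-t0)} } where M(c) = β(c) + M̄ with β: [0,∞)→[0,∞) continuous increasing with β(0)=0. Then for every ε > 0 there exists δ > 0 such that c < δ implies x(t) < ε for all t ≥ t0. -/
import Mathlib


open Set Filter Topology

theorem stmt10 (η lam L1 Mbar t0 : ℝ) (hη : 0 < η) (hlam : 0 < lam)
    (hL1 : 0 < L1) (hM : 0 < Mbar)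
    (α : ℝ → ℝ) (hαc : ContinuousOn α (Ici 0)) (hαm : StrictMonoOn α (Ici 0))
    (hα0 : α 0 = 0) (hαtop : Tendsto α atTop atTop)
    (β : ℝ → ℝ) (hβc : ContinuousOn β (Ici 0)) (hβm : MonotoneOn β (Ici 0))
    (hβ0 : β 0 = 0) (hβnn : ∀ s, 0 ≤ s → 0 ≤ β s)
    (x : ℝ → ℝ → ℝ)
    (hxnn : ∀ c, 0 < c → ∀ t, t0 ≤ t → 0 ≤ x c t)
    (hb : ∀ c, 0 < c → ∀ t, t0 ≤ t →
      x c t ≤ min (c * Real.exp (lam * (t - t0)))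
        (L1 * (β c + Mbar) * Real.exp (-η * (t - t0)))) :
    ∀ ε > (0:ℝ), ∃ δ > (0:ℝ), ∀ c, 0 < c → c < δ →
      ∀ t, t0 ≤ t → x c t < ε := by
  intro ε hε
  have hβ1 : 0 ≤ β 1 := hβnn 1 one_pos.le
  set K : ℝ := L1 * (β 1 + Mbar) with hKdef
  have hKpos : 0 < K := mul_pos hL1 (by linarith)
  set T : ℝ := max 0 (Real.log (K / ε) / η + 1) with hTdef
  have hT0 : 0 ≤ T := le_max_left _ _
  have h2 : Real.log (K / ε) < η * T := by
    have h1 : Real.log (K / ε) / η + 1 ≤ T := le_max_right _ _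
    have h3 : η * (Real.log (K / ε) / η + 1) = Real.log (K / ε) + η := by
      field_simp
    nlinarith [mul_le_mul_of_nonneg_left h1 hη.le]
  have hTK : K * Real.exp (-η * T) < ε := by
    have h4 : Real.exp (-η * T) < ε / K := by
      have : -η * T < Real.log (ε / K) := by
        rw [Real.log_div hε.ne' hKpos.ne']
        rw [Real.log_div hKpos.ne' hε.ne'] at h2
        linarith
      calc Real.exp (-η * T) < Real.exp (Real.log (ε / K)) := Real.exp_lt_exp.mpr this
        _ = ε / K := Real.exp_log (div_pos hε hKpos)
    calc K * Real.exp (-η * T) < K * (ε / K) := by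
          exact mul_lt_mul_of_pos_left h4 hKpos
      _ = ε := by field_simp
  refine ⟨min 1 (ε * Real.exp (-lam * T)), lt_min one_pos (by positivity), ?_⟩
  intro c hc hcδ t ht
  have hc1 : c ≤ 1 := le_of_lt (lt_of_lt_of_le hcδ (min_le_left _ _))
  have hcε : c < ε * Real.exp (-lam * T) := lt_of_lt_of_le hcδ (min_le_right _ _)
  have hbt := hb c hc t ht
  rcases le_total (t - t0) T with hτ | hτ
  · have h5 : x c t ≤ c * Real.exp (lam * (t - t0)) := le_trans hbt (min_le_left _ _)
    have h6 : Real.exp (lam * (t - t0)) ≤ Real.exp (lam * T) :=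
      Real.exp_le_exp.mpr (by nlinarith)
    have h7 : ε * Real.exp (-lam * T) * Real.exp (lam * T) = ε := by
      rw [mul_assoc, ← Real.exp_add]; simp
    have hexp : 0 < Real.exp (lam * T) := Real.exp_pos _
    nlinarith
  · have h5 : x c t ≤ L1 * (β c + Mbar) * Real.exp (-η * (t - t0)) :=
      le_trans hbt (min_le_right _ _)
    have hβc1 : β c ≤ β 1 := hβm hc.le (by norm_num) hc1
    have hβcnn : 0 ≤ β c := hβnn c hc.le
    have h6 : Real.exp (-η * (t - t0)) ≤ Real.exp (-η * T) :=
      Real.exp_le_exp.mpr (by nlinarith)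
    have hexp : 0 < Real.exp (-η * (t - t0)) := Real.exp_pos _
    have h7 : L1 * (β c + Mbar) * Real.exp (-η * (t - t0)) ≤ K * Real.exp (-η * T) := by
      rw [hKdef]
      have ha : L1 * (β c + Mbar) ≤ L1 * (β 1 + Mbar) := by nlinarith
      exact mul_le_mul ha h6 hexp.le (by positivity)
    linarith
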